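/- Let H = {v ∈ ℝⁿ : v₁ + ⋯ + vₙ = 0} be the hyperplane of vectors summing to zero inside ℓ₁ⁿ (n ≥ 2). Then the relative projection constant λ(H, ℓ₁ⁿ) equals 2 − 2/n. -/

import Mathlib

open Finset

lemma norm_E {n : ℕ} (x : PiLp 1 (fun _ : Fin n => ℝ)) : ‖x‖ = ∑ i, |x i| := by
  rw [PiLp.norm_eq_sum (by norm_num : 0 < ENNReal.toReal 1)]
  simp [Real.norm_eq_abs]

noncomputable def P0lin (n : ℕ) : PiLp 1 (fun _ : Fin n => ℝ) →ₗ[ℝ] PiLp 1 (fun _ : Fin n => ℝ) where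
  toFun v := WithLp.toLp 1 (fun i => v i - (∑ j, v j) / n)
  map_add' x y := by
    ext i
    simp only [PiLp.add_apply, Finset.sum_add_distrib]
    ring
  map_smul' c x := by
    ext i
    simp only [PiLp.smul_apply, smul_eq_mul, RingHom.id_apply, ← Finset.mul_sum]
    ring

noncomputable def P0 (n : ℕ) : PiLp 1 (fun _ : Fin n => ℝ) →L[ℝ] PiLp 1 (fun _ : Fin n => ℝ) :=
  LinearMap.toContinuousLinearMap (P0lin n)

lemma P0_apply (n : ℕ) (v : PiLp 1 (fun _ : Fin n => ℝ)) (i : Fin n) :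
    P0 n v i = v i - (∑ j, v j) / n := rfl



/-- Bohnenblust: for `n ≥ 2`, the relative projection constant of the
hyperplane `H = {v : v₁ + ⋯ + vₙ = 0}` in `ℓ₁ⁿ` equals `2 - 2/n`.  The projection
constant is the infimum of the operator norms of bounded linear projections of `ℓ₁ⁿ`
onto `H`. -/
theorem projection_constant_hyperplane_l1 (n : ℕ) (hn : 2 ≤ n) :
    sInf {c : ℝ | ∃ P : PiLp 1 (fun _ : Fin n => ℝ) →L[ℝ] PiLp 1 (fun _ : Fin n => ℝ),
        (∀ v, ∑ i, P v i = 0) ∧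
        (∀ v : PiLp 1 (fun _ : Fin n => ℝ), (∑ i, v i = 0) → P v = v) ∧
        c = ‖P‖} = 2 - 2 / (n : ℝ) := by
  have hn2 : (2:ℝ) ≤ (n:ℝ) := by exact_mod_cast hn
  have hn0 : (0:ℝ) < (n:ℝ) := by linarith
  have hne : (n:ℝ) ≠ 0 := ne_of_gt hn0
  set S := {c : ℝ | ∃ P : PiLp 1 (fun _ : Fin n => ℝ) →L[ℝ] PiLp 1 (fun _ : Fin n => ℝ),
        (∀ v, ∑ i, P v i = 0) ∧
        (∀ v : PiLp 1 (fun _ : Fin n => ℝ), (∑ i, v i = 0) → P v = v) ∧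
        c = ‖P‖} with hSdef
  -- membership of the natural projection
  have cond1 : ∀ v, ∑ i, P0 n v i = 0 := by
    intro v
    simp only [P0_apply]
    rw [Finset.sum_sub_distrib, Finset.sum_const, Finset.card_univ, Fintype.card_fin,
      nsmul_eq_mul]
    field_simp
    ring
  have cond2 : ∀ v : PiLp 1 (fun _ : Fin n => ℝ), (∑ i, v i = 0) → P0 n v = v := by
    intro v hv
    ext i
    show v i - (∑ j, v j) / n = v i
    rw [hv]
    simp
  have hmem : ‖P0 n‖ ∈ S := ⟨P0 n, cond1, cond2, rfl⟩
  have hbdd : BddBelow S := ⟨0, by rintro c ⟨P, _, _, rfl⟩; exact norm_nonneg P⟩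
  -- the key pointwise estimate
  have key : ∀ v : PiLp 1 (fun _ : Fin n => ℝ),
      ∑ i, |v i - (∑ j, v j) / n| ≤ (2 - 2/(n:ℝ)) * ∑ i, |v i| := by
    intro v
    set T := ∑ i, |v i| with hT
    have h1 : ∀ i, |v i - (∑ j, v j)/(n:ℝ)| ≤ (((n:ℝ)-2) * |v i| + T)/(n:ℝ) := by
      intro i
      have e1 : v i - (∑ j, v j)/(n:ℝ) = (∑ j, (v i - v j))/(n:ℝ) := by
        rw [Finset.sum_sub_distrib, Finset.sum_const, Finset.card_univ, Fintype.card_fin,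
          nsmul_eq_mul]
        field_simp
      rw [e1, abs_div, abs_of_pos hn0]
      gcongr
      calc |∑ j, (v i - v j)| ≤ ∑ j, |v i - v j| := Finset.abs_sum_le_sum_abs _ _
        _ = ∑ j ∈ univ.erase i, |v i - v j| := by
            rw [← Finset.sum_erase_add univ _ (mem_univ i)]
            simp
        _ ≤ ∑ j ∈ univ.erase i, (|v i| + |v j|) := by
            exact Finset.sum_le_sum fun j _ => abs_sub _ _
        _ = ((n:ℝ)-1) * |v i| + (T - |v i|) := by
            rw [Finset.sum_add_distrib, Finset.sum_const, Finset.card_erase_of_mem (mem_univ i),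
              Finset.card_univ, Fintype.card_fin, Finset.sum_erase_eq_sub (mem_univ i)]
            have : ((n - 1 : ℕ) : ℝ) = (n:ℝ) - 1 := by
              have : 1 ≤ n := by omega
              push_cast [this]
              ring
            rw [nsmul_eq_mul, this, hT]
        _ = ((n:ℝ)-2) * |v i| + T := by ring
    calc ∑ i, |v i - (∑ j, v j)/(n:ℝ)| ≤ ∑ i, (((n:ℝ)-2) * |v i| + T)/(n:ℝ) :=
          Finset.sum_le_sum fun i _ => h1 i
      _ = (((n:ℝ)-2) * T + (n:ℝ) * T)/(n:ℝ) := by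
          rw [← Finset.sum_div, Finset.sum_add_distrib, ← Finset.mul_sum, Finset.sum_const,
            Finset.card_univ, Fintype.card_fin, nsmul_eq_mul, ← hT]
      _ = (2 - 2/(n:ℝ)) * T := by field_simp; ring
  -- upper bound on the norm of P0
  have hub : ‖P0 n‖ ≤ 2 - 2/(n:ℝ) := by
    have h2n : 2/(n:ℝ) ≤ 1 := by rw [div_le_one hn0]; linarith
    refine ContinuousLinearMap.opNorm_le_bound _ (by linarith) ?_
    intro v
    rw [norm_E, norm_E]
    simp only [P0_apply]
    exact key v
  -- lower bound : every projection has norm at least 2 - 2/n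
  have hlb : ∀ c ∈ S, 2 - 2/(n:ℝ) ≤ c := by
    rintro c ⟨P, hsum, hfix, rfl⟩
    haveI : NeZero n := ⟨by omega⟩
    set e : Fin n → PiLp 1 (fun _ : Fin n => ℝ) := fun j => WithLp.toLp 1 (Pi.single j 1 : ∀ _ : Fin n, ℝ)
      with he
    have hesum : ∀ j, ∑ i, e j i = 1 := by
      intro j
      simp [he, Finset.sum_pi_single]
    have henorm : ∀ j, ‖e j‖ = 1 := by
      intro j
      rw [norm_E]
      simp [he, Pi.single_apply, apply_ite abs]
    set u : PiLp 1 (fun _ : Fin n => ℝ) := e 0 - P (e 0) with hu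
    have husum : ∑ i, u i = 1 := by
      rw [hu]
      simp only [PiLp.sub_apply]
      rw [Finset.sum_sub_distrib, hesum, hsum]
      norm_num
    have hPej : ∀ j, P (e j) = e j - u := by
      intro j
      have hH : ∑ i, (e j - e 0) i = 0 := by
        simp only [PiLp.sub_apply]
        rw [Finset.sum_sub_distrib, hesum, hesum]
        ring
      have h := hfix (e j - e 0) hH
      rw [map_sub] at h
      have : P (e j) = e j - e 0 + P (e 0) := by
        rw [← h]; abel
      rw [this, hu]; abel
    have hnormj : ∀ j, ‖e j - u‖ = (∑ i, |u i|) + (|1 - u j| - |u j|) := by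
      intro j
      rw [norm_E]
      have : ∀ i, |(e j - u) i| = |u i| + (if i = j then |1 - u j| - |u j| else 0) := by
        intro i
        simp only [PiLp.sub_apply]
        rcases eq_or_ne i j with hij | hij
        · subst hij
          rw [if_pos rfl, show e i i = 1 from by simp [he]]
          ring
        · rw [if_neg hij, show e j i = 0 from by simp [he, Pi.single_apply, hij]]
          simp
      simp only [this]
      rw [Finset.sum_add_distrib, Finset.sum_ite_eq' univ j, if_pos (mem_univ j)]
    have hU : 1 ≤ ∑ i, |u i| := by
      calc (1:ℝ) = |∑ i, u i| := by rw [husum]; norm_num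
        _ ≤ ∑ i, |u i| := Finset.abs_sum_le_sum_abs _ _
    have h1u : (n:ℝ) - 1 ≤ ∑ j, |1 - u j| := by
      calc (n:ℝ) - 1 = ∑ j : Fin n, (1 - u j) := by
            rw [Finset.sum_sub_distrib, husum, Finset.sum_const, Finset.card_univ,
              Fintype.card_fin, nsmul_eq_mul, mul_one]
        _ ≤ ∑ j, |1 - u j| := Finset.sum_le_sum fun j _ => le_abs_self _
    have hsum_norm : 2 * (n:ℝ) - 2 ≤ (n:ℝ) * ‖P‖ := by
      have hle : ∀ j, ‖e j - u‖ ≤ ‖P‖ := by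
        intro j
        rw [← hPej j]
        calc ‖P (e j)‖ ≤ ‖P‖ * ‖e j‖ := P.le_opNorm _
          _ = ‖P‖ := by rw [henorm j, mul_one]
      have h2 : ∑ j, ‖e j - u‖ ≤ (n:ℝ) * ‖P‖ := by
        calc ∑ j, ‖e j - u‖ ≤ ∑ _j : Fin n, ‖P‖ := Finset.sum_le_sum fun j _ => hle j
          _ = (n:ℝ) * ‖P‖ := by
            rw [Finset.sum_const, Finset.card_univ, Fintype.card_fin, nsmul_eq_mul]
      have h3 : 2 * (n:ℝ) - 2 ≤ ∑ j, ‖e j - u‖ := by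
        have : ∑ j, ‖e j - u‖ =
            (n:ℝ) * (∑ i, |u i|) + ((∑ j, |1 - u j|) - ∑ j, |u j|) := by
          simp only [hnormj]
          rw [Finset.sum_add_distrib, Finset.sum_const, Finset.card_univ, Fintype.card_fin,
            nsmul_eq_mul, Finset.sum_sub_distrib]
          try ring
        rw [this]
        nlinarith [hU, h1u]
      linarith
    rw [← sub_nonneg]
    have : ‖P‖ - (2 - 2/(n:ℝ)) = ((n:ℝ) * ‖P‖ - (2 * (n:ℝ) - 2))/(n:ℝ) := by
      field_simp
    rw [this]
    exact div_nonneg (by linarith) (le_of_lt hn0)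
  exact le_antisymm ((csInf_le hbdd hmem).trans hub) (le_csInf ⟨_, hmem⟩ hlb)
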